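/- With the setup of the cluster C defined from the minimal permutation π_0 and index j_0 (as in the cluster construction for the symmetrized maximal distance D = D_m(X,Y)): for any pair (x_w, y_{π_0(w)}) ∉ C and any pair (x_z, y_{π_0(z)}) ∈ C, one has |x_z − y_{π_0(w)}| ≥ D and |x_{j_0} − y_{π_0(w)}| ≥ D. -/
import Mathlib

open Finset
open scoped Classical

noncomputable def ed {d : ℕ} (x y : Fin d → ℤ) : ℝ :=
  Real.sqrt (∑ i, ((x i : ℝ) - (y i : ℝ)) ^ 2)

noncomputable def Dm {d n : ℕ} [NeZero n] (x y : Fin n → Fin d → ℤ) : ℝ :=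
  Finset.univ.inf' Finset.univ_nonempty fun π : Equiv.Perm (Fin n) =>
    Finset.univ.sup' Finset.univ_nonempty fun j => ed (x j) (y (π j))

/-- `(x z, y (π₀ z))` belongs to the cluster `𝒞`: either it is directly within
distance `< D` of `x j₀`, or it is reachable from `x j₀` by a chain of distinct
pairs with consecutive distances `< D`. -/
def inCluster {d n : ℕ} (x y : Fin n → Fin d → ℤ) (π₀ : Equiv.Perm (Fin n))
    (D : ℝ) (j₀ z : Fin n) : Prop :=
  ed (x j₀) (y (π₀ z)) < D ∨
  ∃ (m : ℕ) (a : Fin (m + 1) → Fin n), Function.Injective a ∧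
    (∀ k, a k ≠ j₀ ∧ a k ≠ z) ∧
    ed (x j₀) (y (π₀ (a 0))) < D ∧
    (∀ k : Fin m, ed (x (a k.castSucc)) (y (π₀ (a k.succ))) < D) ∧
    ed (x (a (Fin.last m))) (y (π₀ z)) < D

lemma cluster_extend {d n : ℕ} (x y : Fin n → Fin d → ℤ) (π₀ : Equiv.Perm (Fin n))
    (D : ℝ) (j₀ z w : Fin n)
    (hz : inCluster x y π₀ D j₀ z) (hzw : ed (x z) (y (π₀ w)) < D) :
    inCluster x y π₀ D j₀ w := by
  by_cases hzj : z = j₀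
  · exact Or.inl (hzj ▸ hzw)
  by_cases hzw' : z = w
  · exact hzw' ▸ hz
  rcases hz with hd | ⟨m, a, hinj, hne, h0, hmid, hlast⟩
  · exact Or.inr ⟨0, fun _ => z, fun i j _ => Fin.ext (by omega),
      fun _ => ⟨hzj, hzw'⟩, hd, fun k => k.elim0, hzw⟩
  by_cases hw : ∃ k, a k = w
  · obtain ⟨k, hk⟩ := hw
    induction k using Fin.cases with
    | zero => exact Or.inl (hk ▸ h0)
    | succ i =>
      have hib : ∀ t : Fin (i.val + 1), t.val < m + 1 := by
        intro t; have := t.isLt; have := i.isLt; omega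
      refine Or.inr ⟨i.val, fun t => a ⟨t.val, hib t⟩, ?_, ?_, ?_, ?_, ?_⟩
      · intro s t h
        have := hinj h
        simp only [Fin.mk.injEq] at this
        exact Fin.ext this
      · intro t
        refine ⟨(hne _).1, fun h => ?_⟩
        have := hinj (h.trans hk.symm)
        simp only [Fin.ext_iff, Fin.val_succ] at this
        have := t.isLt; omega
      · exact h0
      · intro t
        have htm : t.val < m := by have := t.isLt; have := i.isLt; omega
        exact hmid ⟨t.val, htm⟩
      · have := hmid i
        rw [hk] at this
        exact this
  · push_neg at hw
    refine Or.inr ⟨m + 1, Fin.snoc a z, ?_, ?_, ?_, ?_, ?_⟩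
    · intro s t h
      induction s using Fin.lastCases with
      | last =>
        induction t using Fin.lastCases with
        | last => rfl
        | cast t =>
          rw [Fin.snoc_last, Fin.snoc_castSucc] at h
          exact absurd h.symm (hne t).2
      | cast s =>
        induction t using Fin.lastCases with
        | last =>
          rw [Fin.snoc_last, Fin.snoc_castSucc] at h
          exact absurd h (hne s).2
        | cast t =>
          rw [Fin.snoc_castSucc, Fin.snoc_castSucc] at h
          rw [hinj h]
    · intro k
      induction k using Fin.lastCases with
      | last => rw [Fin.snoc_last]; exact ⟨hzj, hzw'⟩
      | cast k => rw [Fin.snoc_castSucc]; exact ⟨(hne k).1, fun h => hw k h⟩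
    · have h00 : (0 : Fin (m + 1 + 1)) = Fin.castSucc 0 := rfl
      rw [h00, Fin.snoc_castSucc]; exact h0
    · intro k
      induction k using Fin.lastCases with
      | last =>
        rw [Fin.snoc_castSucc, Fin.succ_last, Fin.snoc_last]
        exact hlast
      | cast k =>
        rw [Fin.succ_castSucc, Fin.snoc_castSucc, Fin.snoc_castSucc]
        exact hmid k
    · rw [Fin.snoc_last]; exact hzw

theorem cluster_separation {d n : ℕ} [NeZero n] (x y : Fin n → Fin d → ℤ)
    (hx : Function.Injective x) (hy : Function.Injective y)
    (π₀ : Equiv.Perm (Fin n))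
    (hπ₀D : (Finset.univ.sup' Finset.univ_nonempty fun j => ed (x j) (y (π₀ j)))
      = Dm x y)
    (hπ₀N : ∀ π : Equiv.Perm (Fin n),
      (Finset.univ.sup' Finset.univ_nonempty fun j => ed (x j) (y (π j))) = Dm x y →
      (Finset.univ.filter fun j => ed (x j) (y (π₀ j)) = Dm x y).card ≤
        (Finset.univ.filter fun j => ed (x j) (y (π j)) = Dm x y).card)
    (j₀ : Fin n) (hj₀ : ed (x j₀) (y (π₀ j₀)) = Dm x y) :
    ∀ w z : Fin n, ¬ inCluster x y π₀ (Dm x y) j₀ w → inCluster x y π₀ (Dm x y) j₀ z →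
      Dm x y ≤ ed (x z) (y (π₀ w)) ∧ Dm x y ≤ ed (x j₀) (y (π₀ w)) := by
  intro w z hw hz
  constructor
  · by_contra h
    push_neg at h
    exact hw (cluster_extend x y π₀ (Dm x y) j₀ z w hz h)
  · by_contra h
    push_neg at h
    exact hw (Or.inl h)
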